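/- Let q(s) = Σ_{i=1}^v q_i(s) e^{−h_i s} be a neutral quasi-polynomial with commensurate delays h_i = n_i/N (n_i ∈ ℕ, N a positive integer) such that deg q_v = deg q_1 (so the asymptotic polynomial p has exact degree n_v − n_1), and let q̄(s) = −q(−s) e^{−h_v s} be its conjugate quasi-polynomial. Suppose there exists ε > 0 such that the set {s ∈ ℂ : |Re s| < ε and q̄(s) = 0} is finite. Then the set {s ∈ ℂ : Re s ≥ 0 and q̄(s) = 0} is finite if and only if every complex root x of the asymptotic polynomial p of q satisfies |x| < 1. -/

import Mathlib

open Complex Polynomial BigOperators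


lemma finite_zeros_in_compact {g : ℂ → ℂ} (hg : Differentiable ℂ g) {K : Set ℂ}
    (hK : IsCompact K) {s₁ : ℂ} (hs₁ : g s₁ ≠ 0) : {s | s ∈ K ∧ g s = 0}.Finite := by
  by_contra hinf
  rw [← Set.not_infinite, not_not] at hinf
  obtain ⟨x, -, hacc⟩ := hinf.exists_accPt_of_subset_isCompact hK
    (fun y hy => hy.1)
  rw [accPt_iff_frequently] at hacc
  have hfreq : ∃ᶠ y in nhdsWithin x {x}ᶜ, g y = 0 := by
    rw [frequently_nhdsWithin_iff]
    exact hacc.mono fun y hy => ⟨hy.2.2, hy.1⟩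
  have hE : Set.EqOn g 0 Set.univ :=
    (analyticOnNhd_univ_iff_differentiable.mpr hg).eqOn_zero_of_preconnected_of_frequently_eq_zero
      isPreconnected_univ (Set.mem_univ x) hfreq
  exact hs₁ (hE (Set.mem_univ s₁))

/-- Tail bound for complex polynomial evaluation. -/
lemma evalBound (A : Polynomial ℂ) (d : ℕ) (hd : A.natDegree ≤ d) {ε : ℝ} (hε : 0 < ε) :
    ∃ R : ℝ, 1 ≤ R ∧ ∀ s : ℂ, R ≤ ‖s‖ → ‖A.eval s - A.coeff d * s ^ d‖ ≤ ε * ‖s‖ ^ d := by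
  set Cst := ∑ j ∈ Finset.range d, ‖A.coeff j‖ with hCst
  refine ⟨max 1 (Cst / ε + 1), le_max_left _ _, fun s hs => ?_⟩
  have hs1 : (1 : ℝ) ≤ ‖s‖ := le_trans (le_max_left _ _) hs
  have hsC : Cst ≤ ε * ‖s‖ := by
    have h2 : Cst / ε + 1 ≤ ‖s‖ := le_trans (le_max_right _ _) hs
    have := mul_le_mul_of_nonneg_left h2 hε.le
    rw [mul_add, mul_one, mul_div_cancel₀ _ hε.ne'] at this
    nlinarith
  have hev : A.eval s = ∑ j ∈ Finset.range (d + 1), A.coeff j * s ^ j :=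
    Polynomial.eval_eq_sum_range' (Nat.lt_succ_of_le hd) s
  rw [hev, Finset.sum_range_succ, add_sub_cancel_right]
  calc ‖∑ j ∈ Finset.range d, A.coeff j * s ^ j‖
      ≤ ∑ j ∈ Finset.range d, ‖A.coeff j * s ^ j‖ := norm_sum_le _ _
    _ ≤ ε * ‖s‖ ^ d := by
        rcases Nat.eq_zero_or_pos d with h0 | h0
        · simp [h0]; positivity
        · obtain ⟨e, rfl⟩ : ∃ e, d = e + 1 := ⟨d - 1, (Nat.succ_pred_eq_of_pos h0).symm⟩
          calc ∑ j ∈ Finset.range (e + 1), ‖A.coeff j * s ^ j‖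
              ≤ ∑ j ∈ Finset.range (e + 1), ‖A.coeff j‖ * ‖s‖ ^ e := by
                refine Finset.sum_le_sum fun j hj => ?_
                rw [norm_mul, norm_pow]
                exact mul_le_mul_of_nonneg_left
                  (pow_le_pow_right₀ hs1 (Nat.lt_succ_iff.mp (Finset.mem_range.mp hj)))
                  (norm_nonneg _)
            _ = Cst * ‖s‖ ^ e := by rw [← Finset.sum_mul]
            _ ≤ (ε * ‖s‖) * ‖s‖ ^ e := by
                exact mul_le_mul_of_nonneg_right hsC (by positivity)
            _ = ε * ‖s‖ ^ (e + 1) := by ring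


set_option maxHeartbeats 1000000 in
/-- **Corollary (finitely many unstable roots of the conjugate quasi-polynomial).**
Let `q(s) = ∑_i q_i(s) e^{-h_i s}` be a neutral quasi-polynomial with commensurate
delays `h_i = n_i / N` and `deg q_v = deg q_1` and let `q̄(s) = -q(-s) e^{-h_v s}` be
its conjugate quasi-polynomial.  If the root chains of `q̄` do not approach the
imaginary axis, then `q̄` has finitely many zeros in the closed right half-plane iff
every root `x` of the asymptotic polynomial `p` of `q` satisfies `|x| < 1`. -/
theorem conjugate_finitely_many_unstable_roots_iff
    (v : ℕ) (hv : 0 < v)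
    (Q : Fin (v + 1) → Polynomial ℝ) (hQne : ∀ i, Q i ≠ 0)
    (hQdeg : ∀ i, (Q i).natDegree ≤ (Q 0).natDegree)
    (hneutral : (Q (Fin.last v)).natDegree = (Q 0).natDegree)
    (n : Fin (v + 1) → ℕ) (hnmono : StrictMono n)
    (N : ℕ) (hN : 0 < N)
    (h : Fin (v + 1) → ℝ) (hdelay : ∀ i, h i = (n i : ℝ) / N)
    (q : ℂ → ℂ)
    (hq : ∀ s : ℂ, q s = ∑ i, (Polynomial.aeval s (Q i)) * Complex.exp (-(h i : ℂ) * s))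
    (qbar : ℂ → ℂ)
    (hqbar : ∀ s : ℂ, qbar s = -q (-s) * Complex.exp (-(h (Fin.last v) : ℂ) * s))
    (p : Fin (v + 1) → ℝ)
    (hp : ∀ i, p i = (Q i).coeff ((Q 0).natDegree) / (Q 0).leadingCoeff)
    (P : ℂ → ℂ)
    (hP : ∀ x : ℂ, P x = ∑ i, (p i : ℂ) * x ^ (n i - n 0))
    (haxis : ∃ ε > (0 : ℝ), {s : ℂ | |s.re| < ε ∧ qbar s = 0}.Finite) :
    {s : ℂ | 0 ≤ s.re ∧ qbar s = 0}.Finite ↔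
      (∀ x : ℂ, P x = 0 → ‖x‖ < 1) := by
  set d := (Q 0).natDegree with hdd
  set c : Fin (v + 1) → ℂ := fun i => ((Q i).coeff d : ℂ) with hcc
  set k : Fin (v + 1) → ℕ := fun i => n i - n 0 with hkk
  set D := k (Fin.last v) with hDD
  have hn0 : ∀ i, n 0 ≤ n i := fun i => hnmono.monotone (Fin.zero_le i)
  have hkmono : StrictMono k := fun i j hij =>
    Nat.sub_lt_sub_right (hn0 i) (hnmono hij)
  have hkD : ∀ i, k i ≤ D := fun i =>
    Nat.sub_le_sub_right (hnmono.monotone (Fin.le_last i)) _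
  have hclast : c (Fin.last v) ≠ 0 := by
    simp only [hcc, ← hneutral, Polynomial.coeff_natDegree, Complex.ofReal_ne_zero]
    exact Polynomial.leadingCoeff_ne_zero.mpr (hQne _)
  have hlcne : ((Q 0).leadingCoeff : ℂ) ≠ 0 := by
    simp only [Complex.ofReal_ne_zero]
    exact Polynomial.leadingCoeff_ne_zero.mpr (hQne 0)
  set PC : Polynomial ℂ := ∑ i, Polynomial.C (c i) * Polynomial.X ^ (k i) with hPCdef
  have hPCeval : ∀ z : ℂ, PC.eval z = ∑ i, c i * z ^ (k i) := by
    intro z; simp [hPCdef, Polynomial.eval_finset_sum]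
  have hPCcoeff : PC.coeff D = c (Fin.last v) := by
    rw [hPCdef, Polynomial.finset_sum_coeff]
    rw [Finset.sum_eq_single (Fin.last v)]
    · simp [Polynomial.coeff_C_mul_X_pow, hDD]
    · intro i _ hi
      rw [Polynomial.coeff_C_mul_X_pow]
      have hne : k i ≠ D := fun hkiD => hi (hkmono.injective hkiD)
      rw [if_neg (fun hh : D = k i => hne hh.symm)]
    · intro habs; exact absurd (Finset.mem_univ _) habs
  have hPC0 : PC ≠ 0 := fun h0 => hclast (by rw [← hPCcoeff, h0, Polynomial.coeff_zero])
  have hPCdeg : PC.natDegree ≤ D :=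
    Polynomial.natDegree_sum_le_of_forall_le _ _ fun i _ =>
      (Polynomial.natDegree_C_mul_X_pow_le _ _).trans (hkD i)
  have hlcP : ∀ x : ℂ, ((Q 0).leadingCoeff : ℂ) * P x = PC.eval x := by
    intro x
    rw [hP, hPCeval, Finset.mul_sum]
    refine Finset.sum_congr rfl fun i _ => ?_
    rw [hp, hcc]
    push_cast
    rw [← mul_assoc, mul_div_cancel₀ _ hlcne]
  have hPiff : ∀ x : ℂ, (P x = 0 ↔ PC.eval x = 0) := by
    intro x
    rw [← hlcP, mul_eq_zero]
    simp [hlcne]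
  have hNR : (0 : ℝ) < (N : ℝ) := by exact_mod_cast hN
  have hNC : (N : ℂ) ≠ 0 := by exact_mod_cast hN.ne'
  have hznorm : ∀ s : ℂ, ‖Complex.exp (-s / N)‖ = Real.exp (-s.re / N) := by
    intro s
    have h1 : -s / (N : ℂ) = (((N : ℝ)⁻¹ : ℝ) : ℂ) * (-s) := by push_cast; ring
    rw [h1, Complex.norm_exp, Complex.re_ofReal_mul]
    congr 1
    simp [neg_div, div_eq_inv_mul]
  have hG : ∀ s : ℂ, q s * Complex.exp ((h 0 : ℂ) * s)
      = ∑ i, (Polynomial.aeval s (Q i)) * (Complex.exp (-s / N)) ^ (k i) := by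
    intro s
    rw [hq, Finset.sum_mul]
    refine Finset.sum_congr rfl fun i _ => ?_
    rw [mul_assoc, ← Complex.exp_nat_mul, ← Complex.exp_add]
    congr 2
    have hki : ((k i : ℕ) : ℂ) = (n i : ℂ) - (n 0 : ℂ) := by
      rw [hkk]; push_cast [Nat.cast_sub (hn0 i)]; ring
    rw [hdelay i, hdelay 0, hki]
    push_cast
    field_simp
    ring
  have hAi : ∀ i, ((Q i).map (algebraMap ℝ ℂ)).natDegree ≤ d :=
    fun i => Polynomial.natDegree_map_le.trans (hQdeg i)
  have hAeval : ∀ i (s : ℂ), ((Q i).map (algebraMap ℝ ℂ)).eval s = Polynomial.aeval s (Q i) := by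
    intro i s; rw [Polynomial.eval_map, Polynomial.aeval_def]
  have hAcoeff : ∀ i, ((Q i).map (algebraMap ℝ ℂ)).coeff d = c i := by
    intro i; rw [Polynomial.coeff_map]; rfl
  have hqdiff : Differentiable ℂ q := by
    have : q = fun s => ∑ i, (Polynomial.aeval s (Q i)) * Complex.exp (-(h i : ℂ) * s) :=
      funext hq
    rw [this]
    refine Differentiable.fun_sum fun i _ => Differentiable.fun_mul ?_ ?_
    · have : (fun s : ℂ => Polynomial.aeval s (Q i))
        = fun s => ((Q i).map (algebraMap ℝ ℂ)).eval s := by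
        funext s; rw [hAeval]
      rw [this]; exact Polynomial.differentiable _
    · exact Complex.differentiable_exp.comp ((differentiable_const _).mul differentiable_id)
  have hkey : ∀ ε : ℝ, 0 < ε → ∃ R : ℝ, 1 ≤ R ∧ ∀ s : ℂ, R ≤ ‖s‖ →
      ‖q s * Complex.exp ((h 0 : ℂ) * s) - s ^ d * PC.eval (Complex.exp (-s / N))‖
        ≤ ε * (∑ i, ‖Complex.exp (-s / N)‖ ^ (k i)) * ‖s‖ ^ d := by
    intro ε hε
    have Hex : ∀ i : Fin (v + 1), ∃ R : ℝ, 1 ≤ R ∧ ∀ s : ℂ, R ≤ ‖s‖ →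
        ‖((Q i).map (algebraMap ℝ ℂ)).eval s - c i * s ^ d‖ ≤ ε * ‖s‖ ^ d := by
      intro i
      obtain ⟨R, hR1, hR⟩ := evalBound ((Q i).map (algebraMap ℝ ℂ)) d (hAi i) hε
      exact ⟨R, hR1, fun s hs => by rw [← hAcoeff i]; exact hR s hs⟩
    choose Rf hRf1 hRf using Hex
    refine ⟨Finset.univ.sup' ⟨0, Finset.mem_univ 0⟩ Rf,
      le_trans (hRf1 0) (Finset.le_sup' _ (Finset.mem_univ 0)), fun s hs => ?_⟩
    have hsR : ∀ i, Rf i ≤ ‖s‖ :=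
      fun i => le_trans (Finset.le_sup' _ (Finset.mem_univ i)) hs
    rw [hG, hPCeval, Finset.mul_sum, ← Finset.sum_sub_distrib]
    calc ‖∑ i, ((Polynomial.aeval s (Q i)) * (Complex.exp (-s / N)) ^ (k i)
            - s ^ d * (c i * (Complex.exp (-s / N)) ^ (k i)))‖
        ≤ ∑ i, ‖(Polynomial.aeval s (Q i)) * (Complex.exp (-s / N)) ^ (k i)
            - s ^ d * (c i * (Complex.exp (-s / N)) ^ (k i))‖ := norm_sum_le _ _
      _ ≤ ∑ i, ε * ‖Complex.exp (-s / N)‖ ^ (k i) * ‖s‖ ^ d := by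
          refine Finset.sum_le_sum fun i _ => ?_
          have heq : (Polynomial.aeval s (Q i)) * (Complex.exp (-s / N)) ^ (k i)
              - s ^ d * (c i * (Complex.exp (-s / N)) ^ (k i))
              = (((Q i).map (algebraMap ℝ ℂ)).eval s - c i * s ^ d)
                * (Complex.exp (-s / N)) ^ (k i) := by
            rw [hAeval]; ring
          rw [heq, norm_mul, norm_pow]
          calc ‖((Q i).map (algebraMap ℝ ℂ)).eval s - c i * s ^ d‖
                  * ‖Complex.exp (-s / N)‖ ^ (k i)
              ≤ (ε * ‖s‖ ^ d) * ‖Complex.exp (-s / N)‖ ^ (k i) :=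
                mul_le_mul_of_nonneg_right (hRf i s (hsR i)) (by positivity)
            _ = ε * ‖Complex.exp (-s / N)‖ ^ (k i) * ‖s‖ ^ d := by ring
      _ = ε * (∑ i, ‖Complex.exp (-s / N)‖ ^ (k i)) * ‖s‖ ^ d := by
          rw [← Finset.sum_mul, ← Finset.mul_sum]
  have hqbar0 : ∀ s : ℂ, qbar s = 0 ↔ q (-s) = 0 := by
    intro s
    rw [hqbar, mul_eq_zero, neg_eq_zero]
    simp [Complex.exp_ne_zero]
  -- MPR direction
  have MPR : (∀ x : ℂ, P x = 0 → ‖x‖ < 1) →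
      {s : ℂ | 0 ≤ s.re ∧ qbar s = 0}.Finite := by
    intro hroots
    have hclpos : 0 < ‖c (Fin.last v)‖ / 2 := div_pos (norm_pos_iff.mpr hclast) two_pos
    obtain ⟨R0, hR01, hR0⟩ := evalBound PC D hPCdeg hclpos
    set Ann : Set ℂ := {z | 1 ≤ ‖z‖ ∧ ‖z‖ ≤ R0} with hAnn
    have hAnnC : IsCompact Ann := by
      have hcl : IsClosed Ann := by
        have : Ann = (fun z : ℂ => ‖z‖) ⁻¹' (Set.Icc 1 R0) := rfl
        rw [this]
        exact IsClosed.preimage continuous_norm isClosed_Icc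
      have hbd : Bornology.IsBounded Ann :=
        (Metric.isBounded_closedBall (x := (0:ℂ)) (r := R0)).subset
          (fun z hz => by simpa [Metric.mem_closedBall] using hz.2)
      exact Metric.isCompact_of_isClosed_isBounded hcl hbd
    have hAnnne : Ann.Nonempty := ⟨(1 : ℂ), by simp, by simpa using hR01⟩
    obtain ⟨z0, hz0A, hz0min⟩ := hAnnC.exists_isMinOn hAnnne
      ((continuous_norm.comp (Polynomial.differentiable PC).continuous).continuousOn)
    set m := ‖PC.eval z0‖ with hm
    have hmpos : 0 < m := by
      rw [hm, norm_pos_iff]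
      intro h0
      have : ‖z0‖ < 1 := hroots z0 ((hPiff z0).mpr h0)
      exact absurd hz0A.1 (by linarith)
    have hR0pos : (0:ℝ) < R0 := lt_of_lt_of_le one_pos hR01
    set c0 : ℝ := min (m / R0 ^ D) (‖c (Fin.last v)‖ / 2) with hc0def
    have hc0 : 0 < c0 := lt_min (by positivity) hclpos
    have hlow : ∀ z : ℂ, 1 ≤ ‖z‖ → c0 * ‖z‖ ^ D ≤ ‖PC.eval z‖ := by
      intro z hz1
      by_cases hzR : ‖z‖ ≤ R0
      · have hmem : z ∈ Ann := ⟨hz1, hzR⟩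
        have h1 : m ≤ ‖PC.eval z‖ := hz0min hmem
        have h2 : ‖z‖ ^ D ≤ R0 ^ D := pow_le_pow_left₀ (by linarith) hzR D
        have h3 : c0 * ‖z‖ ^ D ≤ (m / R0 ^ D) * R0 ^ D :=
          mul_le_mul (min_le_left _ _) h2 (by positivity) (by positivity)
        rw [div_mul_cancel₀ _ (by positivity : (R0:ℝ) ^ D ≠ 0)] at h3
        linarith
      · push_neg at hzR
        have h1 : ‖PC.coeff D * z ^ D‖ - ‖PC.eval z‖ ≤ ‖PC.eval z - PC.coeff D * z ^ D‖ := by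
          have := norm_sub_norm_le (PC.coeff D * z ^ D) (PC.eval z)
          rw [← norm_neg (PC.coeff D * z ^ D - PC.eval z)] at this
          simpa [neg_sub] using this
        have h2 : ‖PC.eval z - PC.coeff D * z ^ D‖ ≤ (‖c (Fin.last v)‖ / 2) * ‖z‖ ^ D :=
          hR0 z hzR.le
        rw [hPCcoeff] at h1 h2
        rw [norm_mul, norm_pow] at h1
        have h4 : c0 * ‖z‖ ^ D ≤ (‖c (Fin.last v)‖ / 2) * ‖z‖ ^ D :=
          mul_le_mul_of_nonneg_right (min_le_right _ _) (by positivity)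
        linarith
    have hεpos : 0 < c0 / (2 * (v + 1)) := by positivity
    obtain ⟨R, hR1, hRkey⟩ := hkey _ hεpos
    have hS : ∀ s : ℂ, s.re ≤ 0 → R ≤ ‖s‖ → q s ≠ 0 := by
      intro s hre hsR hq0
      set z := Complex.exp (-s / N) with hz
      have hz1 : 1 ≤ ‖z‖ := by
        rw [hz, hznorm]
        exact Real.one_le_exp (div_nonneg (by linarith) hNR.le)
      have hsum : (∑ i, ‖z‖ ^ (k i)) ≤ (v + 1) * ‖z‖ ^ D := by
        calc (∑ i : Fin (v+1), ‖z‖ ^ (k i)) ≤ ∑ i : Fin (v+1), ‖z‖ ^ D :=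
              Finset.sum_le_sum fun i _ => pow_le_pow_right₀ hz1 (hkD i)
          _ = (v + 1) * ‖z‖ ^ D := by
              rw [Finset.sum_const, Finset.card_univ, Fintype.card_fin, nsmul_eq_mul]
              push_cast; ring
      have hkb := hRkey s hsR
      have hq0' : q s * Complex.exp ((h 0 : ℂ) * s) = 0 := by rw [hq0, zero_mul]
      rw [hq0', zero_sub, norm_neg] at hkb
      have hlow' : c0 * ‖z‖ ^ D * ‖s‖ ^ d ≤ ‖s ^ d * PC.eval z‖ := by
        rw [norm_mul, norm_pow]
        calc c0 * ‖z‖ ^ D * ‖s‖ ^ d ≤ ‖PC.eval z‖ * ‖s‖ ^ d :=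
              mul_le_mul_of_nonneg_right (hlow z hz1) (by positivity)
          _ = ‖s‖ ^ d * ‖PC.eval z‖ := by ring
      have hub : (c0 / (2 * (v + 1))) * (∑ i, ‖z‖ ^ (k i)) * ‖s‖ ^ d
          ≤ (c0 / 2) * ‖z‖ ^ D * ‖s‖ ^ d := by
        have h5 : (c0 / (2 * (v + 1))) * (∑ i, ‖z‖ ^ (k i)) ≤ (c0 / 2) * ‖z‖ ^ D := by
          have h6 : (c0 / (2 * (v + 1))) * (∑ i, ‖z‖ ^ (k i))
              ≤ (c0 / (2 * (v + 1))) * ((v + 1) * ‖z‖ ^ D) :=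
            mul_le_mul_of_nonneg_left hsum hεpos.le
          have h7 : (c0 / (2 * (v + 1))) * ((v + 1) * ‖z‖ ^ D) = (c0 / 2) * ‖z‖ ^ D := by
            field_simp
          linarith
        exact mul_le_mul_of_nonneg_right h5 (by positivity)
      have hzD : (1:ℝ) ≤ ‖z‖ ^ D := one_le_pow₀ hz1
      have hs1 : (1:ℝ) ≤ ‖s‖ := le_trans hR1 hsR
      have hsd : (1:ℝ) ≤ ‖s‖ ^ d := one_le_pow₀ hs1
      have hcontra : ‖s ^ d * PC.eval z‖ ≤ (c0 / 2) * ‖z‖ ^ D * ‖s‖ ^ d :=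
        le_trans hkb hub
      have habpos : 0 < ‖z‖ ^ D * ‖s‖ ^ d := by positivity
      have h10 := le_trans hlow' hcontra
      rw [mul_assoc, mul_assoc] at h10
      have h11 := (mul_le_mul_iff_of_pos_right habpos).mp h10
      linarith
    have hwit : q ((-(R + 1) : ℝ) : ℂ) ≠ 0 := by
      apply hS
      · rw [Complex.ofReal_re]; linarith
      · rw [Complex.norm_real, Real.norm_eq_abs, abs_of_nonpos (by linarith)]
        linarith
    have hSfin := finite_zeros_in_compact hqdiff (isCompact_closedBall (0:ℂ) R) hwit
    apply Set.Finite.subset (hSfin.preimage neg_injective.injOn)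
    intro s hs
    obtain ⟨hs1, hs2⟩ := hs
    have hqneg : q (-s) = 0 := (hqbar0 s).mp hs2
    have hre : (-s).re ≤ 0 := by
      rw [Complex.neg_re]; linarith
    refine ⟨?_, hqneg⟩
    rw [Metric.mem_closedBall, dist_zero_right]
    by_contra hgt
    push_neg at hgt
    exact hS (-s) hre hgt.le hqneg
  -- MP direction
  have MP : {s : ℂ | 0 ≤ s.re ∧ qbar s = 0}.Finite →
      ∀ x : ℂ, P x = 0 → ‖x‖ < 1 := by
    intro hfin x hPx
    by_contra hge
    push_neg at hge
    obtain ⟨εa, hεa, hstrip⟩ := haxis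
    have hx0 : x ≠ 0 := by
      intro h0
      rw [h0, norm_zero] at hge
      linarith
    set s0 : ℂ := -(N : ℂ) * Complex.log x with hs0
    have hexps0 : Complex.exp (-s0 / N) = x := by
      have h1 : -s0 / (N:ℂ) = Complex.log x := by rw [hs0]; field_simp
      rw [h1, Complex.exp_log hx0]
    have hs0re : s0.re ≤ 0 := by
      have h1 : s0 = ((-(N:ℝ) : ℝ) : ℂ) * Complex.log x := by rw [hs0]; push_cast; ring
      rw [h1, Complex.re_ofReal_mul, Complex.log_re]
      have h2 : 0 ≤ Real.log ‖x‖ := Real.log_nonneg hge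
      nlinarith
    set f : ℂ → ℂ := fun w => PC.eval (Complex.exp (-(s0 + w) / N)) with hf
    have hf0 : f 0 = 0 := by
      show PC.eval (Complex.exp (-(s0 + 0) / N)) = 0
      rw [add_zero, hexps0]
      exact (hPiff x).mp hPx
    have hfdiff : Differentiable ℂ f := by
      apply (Polynomial.differentiable PC).comp
      apply Complex.differentiable_exp.comp
      fun_prop
    obtain ⟨t, hft⟩ : ∃ t : ℝ, f ((t : ℝ) : ℂ) ≠ 0 := by
      have hroots : {y : ℂ | PC.IsRoot y}.Finite := Polynomial.finite_setOf_isRoot hPC0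
      obtain ⟨B, hB⟩ := (hroots.image (fun y : ℂ => ‖y‖)).bddAbove
      set B' := max B 0 with hB'
      refine ⟨-s0.re - N * (Real.log (B' + 1) + 1), fun hzero => ?_⟩
      have hBpos : (0:ℝ) < B' + 1 := by positivity
      have hnorm : ‖Complex.exp (-(s0 + ((-s0.re - N * (Real.log (B' + 1) + 1) : ℝ) : ℂ)) / N)‖
          = Real.exp (Real.log (B' + 1) + 1) := by
        rw [hznorm]
        congr 1
        rw [Complex.add_re, Complex.ofReal_re]
        field_simp
        ring
      have habs : ‖(Complex.exp
          (-(s0 + ((-s0.re - N * (Real.log (B' + 1) + 1) : ℝ) : ℂ)) / N))‖ ≤ B' :=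
        le_trans (hB (Set.mem_image_of_mem _ hzero)) (le_max_left B 0)
      rw [hnorm, Real.exp_add, Real.exp_log hBpos] at habs
      nlinarith [Real.exp_one_gt_d9, le_max_right B (0:ℝ), le_max_left B (0:ℝ)]
    have hfan : AnalyticOnNhd ℂ f Set.univ := analyticOnNhd_univ_iff_differentiable.mpr hfdiff
    have hiso : ∀ᶠ w in nhdsWithin 0 {(0:ℂ)}ᶜ, f w ≠ 0 := by
      rcases (hfan 0 (Set.mem_univ 0)).eventually_eq_zero_or_eventually_ne_zero with hc | hc
      · exfalso
        have hfreq : ∃ᶠ w in nhdsWithin 0 {(0:ℂ)}ᶜ, f w = 0 :=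
          (hc.filter_mono nhdsWithin_le_nhds).frequently
        have hEq := hfan.eqOn_zero_of_preconnected_of_frequently_eq_zero isPreconnected_univ
          (Set.mem_univ 0) hfreq
        exact hft (hEq (Set.mem_univ _))
      · exact hc
    rw [eventually_nhdsWithin_iff] at hiso
    obtain ⟨δ, hδ, hδball⟩ := Metric.eventually_nhds_iff.mp hiso
    set ρ : ℝ := if s0.re < 0 then -s0.re else 1 with hρ
    have hρpos : 0 < ρ := by
      rw [hρ]; split
      · linarith
      · norm_num
    set r : ℝ := min (δ / 2) (min (N : ℝ) (min (εa / 2) ρ)) / 1 with hrdef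
    have hrpos : 0 < r := by
      rw [hrdef, div_one]
      exact lt_min (by linarith) (lt_min hNR (lt_min (by linarith) hρpos))
    have hrδ : r < δ := by
      have := min_le_left (δ / 2) (min (N : ℝ) (min (εa / 2) ρ))
      rw [hrdef, div_one]; linarith
    have hrN : r ≤ (N : ℝ) := by
      have h1 := min_le_right (δ / 2) (min (N : ℝ) (min (εa / 2) ρ))
      have h2 := min_le_left (N : ℝ) (min (εa / 2) ρ)
      rw [hrdef, div_one]; linarith
    have hrε : r < εa := by
      have h1 := min_le_right (δ / 2) (min (N : ℝ) (min (εa / 2) ρ))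
      have h2 := min_le_right (N : ℝ) (min (εa / 2) ρ)
      have h3 := min_le_left (εa / 2) ρ
      rw [hrdef, div_one]; linarith
    have hrρ : r ≤ ρ := by
      have h1 := min_le_right (δ / 2) (min (N : ℝ) (min (εa / 2) ρ))
      have h2 := min_le_right (N : ℝ) (min (εa / 2) ρ)
      have h3 := min_le_right (εa / 2) ρ
      rw [hrdef, div_one]; linarith
    -- minimum of ‖f‖ on the sphere of radius r
    have hsphne : (Metric.sphere (0:ℂ) r).Nonempty := by
      refine ⟨((r : ℝ) : ℂ), ?_⟩
      show dist ((r : ℝ) : ℂ) 0 = r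
      rw [dist_zero_right, Complex.norm_real, Real.norm_eq_abs, _root_.abs_of_nonneg hrpos.le]
    obtain ⟨w0, hw0s, hw0min⟩ := (isCompact_sphere (0:ℂ) r).exists_isMinOn hsphne
      ((continuous_norm.comp hfdiff.continuous).continuousOn)
    set m := ‖f w0‖ with hmdef
    have hw0r : dist w0 0 = r := Metric.mem_sphere.mp hw0s
    have hm : 0 < m := by
      rw [hmdef, norm_pos_iff]
      apply hδball (by rw [hw0r]; exact hrδ)
      intro h0
      rw [h0] at hw0r
      simp at hw0r
      exact hrpos.ne hw0r
    -- uniform bound M on ‖exp (-(s0+w)/N)‖ for ‖w‖ ≤ r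
    set M : ℝ := Real.exp ((‖s0‖ + r) / N) with hMdef
    have hM1 : 1 ≤ M := Real.one_le_exp (by positivity)
    have hzM : ∀ w : ℂ, ‖w‖ ≤ r → ‖Complex.exp (-(s0 + w) / N)‖ ≤ M := by
      intro w hw
      rw [hznorm, hMdef]
      apply Real.exp_le_exp.mpr
      rw [div_le_div_iff_of_pos_right hNR]
      have h1 : |s0.re| ≤ ‖s0‖ := by
        exact Complex.abs_re_le_norm s0
      have h2 : |w.re| ≤ ‖w‖ := by
        exact Complex.abs_re_le_norm w
      rw [Complex.add_re, neg_add]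
      have := abs_le.mp h1
      have := abs_le.mp h2
      linarith
    have hMD1 : (1:ℝ) ≤ M ^ D := one_le_pow₀ hM1
    have hεm : 0 < m / (3 * (v + 1) * M ^ D) := by positivity
    obtain ⟨R, hR1, hRkey⟩ := hkey _ hεm
    -- choose k0
    obtain ⟨k0, hk0⟩ := exists_nat_ge ((R + ‖s0‖ + r + 1) / (2 * Real.pi * N))
    have h2πN : 0 < 2 * Real.pi * N := by positivity
    set T : ℕ → ℝ := fun j => 2 * Real.pi * N * (k0 + j) with hT
    have hTge : ∀ j : ℕ, R + ‖s0‖ + r + 1 ≤ T j := by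
      intro j
      have h1 : R + ‖s0‖ + r + 1 ≤ 2 * Real.pi * N * k0 := by
        rw [div_le_iff₀ h2πN] at hk0
        linarith
      have h2 : (2 * Real.pi * N) * (k0:ℝ) ≤ (2 * Real.pi * N) * (k0 + j) := by
        apply mul_le_mul_of_nonneg_left _ h2πN.le
        push_cast; linarith [Nat.cast_nonneg (α := ℝ) j]
      rw [hT]; dsimp only; linarith
    -- existence of a zero of q near each s0 + T j * I
    have hzero : ∀ j : ℕ, ∃ σ : ℂ, dist σ (s0 + ((T j : ℝ) : ℂ) * Complex.I) ≤ r ∧ q σ = 0 := by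
      intro j
      set cj : ℂ := s0 + ((T j : ℝ) : ℂ) * Complex.I with hcj
      have hexpTj : Complex.exp (-((T j : ℝ) : ℂ) * Complex.I / N) = 1 := by
        have h1 : -((T j : ℝ) : ℂ) * Complex.I / N = ((-(k0 + j) : ℤ) : ℂ) * (2 * Real.pi * Complex.I) := by
          rw [hT]; push_cast; field_simp
        rw [h1, Complex.exp_int_mul_two_pi_mul_I]
      have hfσ : ∀ σ : ℂ, PC.eval (Complex.exp (-σ / N)) = f (σ - cj) := by
        intro σ
        show _ = PC.eval (Complex.exp (-(s0 + (σ - cj)) / N))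
        congr 1
        have hsplit : -σ / (N:ℂ) = -(s0 + (σ - cj)) / N + (-((T j : ℝ) : ℂ) * Complex.I / N) := by
          rw [hcj]; field_simp; ring
        rw [hsplit, Complex.exp_add, hexpTj, mul_one]
      have hnormσ : ∀ σ : ℂ, dist σ cj ≤ r → R ≤ ‖σ‖ := by
        intro σ hσ
        have h1 : |cj.im| ≤ ‖cj‖ := by
          exact Complex.abs_im_le_norm cj
        have h2 : cj.im = s0.im + T j := by
          rw [hcj]; simp
        have h3 : |s0.im| ≤ ‖s0‖ := by
          exact Complex.abs_im_le_norm s0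
        have h4 : T j - ‖s0‖ ≤ ‖cj‖ := by
          have := abs_le.mp h3
          have h5 : T j - ‖s0‖ ≤ cj.im := by rw [h2]; linarith
          have := le_abs_self cj.im
          linarith
        have h6 : ‖cj‖ - ‖σ‖ ≤ dist σ cj := by
          rw [dist_eq_norm]
          have := norm_sub_norm_le σ cj
          have h7 := norm_sub_norm_le cj σ
          rw [norm_sub_rev] at h7
          linarith
        have := hTge j
        linarith
      have hkeyσ : ∀ σ : ℂ, dist σ cj ≤ r →
          ‖q σ * Complex.exp ((h 0 : ℂ) * σ) - σ ^ d * f (σ - cj)‖ ≤ (m / 3) * ‖σ‖ ^ d := by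
        intro σ hσ
        have h1 := hRkey σ (hnormσ σ hσ)
        rw [hfσ σ] at h1
        refine le_trans h1 ?_
        have h2 : ‖σ - cj‖ ≤ r := by rw [← dist_eq_norm]; exact hσ
        have hz : Complex.exp (-σ / N) = Complex.exp (-(s0 + (σ - cj)) / N)
            * Complex.exp (-((T j : ℝ) : ℂ) * Complex.I / N) := by
          rw [← Complex.exp_add]
          congr 1
          rw [hcj]
          field_simp
          ring
        have hzb : ‖Complex.exp (-σ / N)‖ ≤ M := by
          rw [hz, hexpTj, mul_one]
          exact hzM _ h2
        have h3 : (∑ i, ‖Complex.exp (-σ / N)‖ ^ (k i)) ≤ (v + 1) * M ^ D := by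
          calc (∑ i : Fin (v+1), ‖Complex.exp (-σ / N)‖ ^ (k i))
              ≤ ∑ i : Fin (v+1), M ^ D := by
                refine Finset.sum_le_sum fun i _ => ?_
                calc ‖Complex.exp (-σ / N)‖ ^ (k i) ≤ M ^ (k i) :=
                      pow_le_pow_left₀ (norm_nonneg _) hzb _
                  _ ≤ M ^ D := pow_le_pow_right₀ hM1 (hkD i)
            _ = (v + 1) * M ^ D := by
                rw [Finset.sum_const, Finset.card_univ, Fintype.card_fin, nsmul_eq_mul]
                push_cast; ring
        have h4 : m / (3 * (v + 1) * M ^ D) * (∑ i, ‖Complex.exp (-σ / N)‖ ^ (k i))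
            ≤ m / 3 := by
          have h5 := mul_le_mul_of_nonneg_left h3 hεm.le
          have h6 : m / (3 * (v + 1) * M ^ D) * ((v + 1) * M ^ D) = m / 3 := by
            field_simp
          linarith
        exact mul_le_mul_of_nonneg_right h4 (by positivity)
      by_contra hno
      push_neg at hno
      have hnoz : ∀ σ ∈ Metric.closedBall cj r, q σ * Complex.exp ((h 0 : ℂ) * σ) ≠ 0 := by
        intro σ hσ
        exact mul_ne_zero (hno σ (Metric.mem_closedBall.mp hσ)) (Complex.exp_ne_zero _)
      set Φ : ℂ → ℂ := fun σ => σ ^ d / (q σ * Complex.exp ((h 0 : ℂ) * σ)) with hΦ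
      have hqexpdiff : Differentiable ℂ (fun σ : ℂ => q σ * Complex.exp ((h 0 : ℂ) * σ)) :=
        hqdiff.mul (Complex.differentiable_exp.comp (by fun_prop))
      have hΦdiff : DifferentiableOn ℂ Φ (Metric.closedBall cj r) := by
        apply DifferentiableOn.div
        · exact (differentiable_pow d).differentiableOn
        · exact hqexpdiff.differentiableOn
        · exact hnoz
      have hdcc : DiffContOnCl ℂ Φ (Metric.ball cj r) := by
        apply DifferentiableOn.diffContOnCl
        rw [closure_ball cj hrpos.ne']
        exact hΦdiff
      have hbdry : ∀ σ ∈ frontier (Metric.ball cj r), ‖Φ σ‖ ≤ 3 / (2 * m) := by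
        rw [frontier_ball cj hrpos.ne']
        intro σ hσ
        have hσd : dist σ cj = r := Metric.mem_sphere.mp hσ
        have hσr : dist σ cj ≤ r := hσd.le
        have hRσ := hnormσ σ hσr
        have hσpos : (0:ℝ) < ‖σ‖ ^ d := by
          have : (0:ℝ) < ‖σ‖ := by linarith
          positivity
        have hw : σ - cj ∈ Metric.sphere (0:ℂ) r := by
          rw [Metric.mem_sphere, dist_zero_right, ← dist_eq_norm]
          exact hσd
        have hfw : m ≤ ‖f (σ - cj)‖ := hw0min hw
        have h1 := hkeyσ σ hσr
        have h2 : ‖σ ^ d * f (σ - cj)‖ = ‖σ‖ ^ d * ‖f (σ - cj)‖ := by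
          rw [norm_mul, norm_pow]
        have h3 : (2 * m / 3) * ‖σ‖ ^ d ≤ ‖q σ * Complex.exp ((h 0 : ℂ) * σ)‖ := by
          have h4 := norm_sub_norm_le (σ ^ d * f (σ - cj)) (q σ * Complex.exp ((h 0 : ℂ) * σ))
          rw [norm_sub_rev] at h4
          have h5 : m * ‖σ‖ ^ d ≤ ‖σ ^ d * f (σ - cj)‖ := by
            rw [h2]
            nlinarith
          nlinarith
        rw [hΦ]
        dsimp only
        rw [norm_div, norm_pow]
        have hqpos : 0 < ‖q σ * Complex.exp ((h 0 : ℂ) * σ)‖ := by nlinarith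
        rw [div_le_div_iff₀ hqpos (by positivity : (0:ℝ) < 2 * m)]
        nlinarith
      have hcenter : ‖Φ cj‖ ≤ 3 / (2 * m) :=
        Complex.norm_le_of_forall_mem_frontier_norm_le Metric.isBounded_ball hdcc hbdry
          (by rw [closure_ball cj hrpos.ne']; exact Metric.mem_closedBall_self hrpos.le)
      -- but the center value is too large
      have hRcj := hnormσ cj (by simp [hrpos.le])
      have hcjpos : (0:ℝ) < ‖cj‖ ^ d := by
        have : (0:ℝ) < ‖cj‖ := by linarith
        positivity
      have h1 := hkeyσ cj (by simp [hrpos.le])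
      rw [sub_self, hf0, mul_zero, sub_zero] at h1
      have hqcj : 0 < ‖q cj * Complex.exp ((h 0 : ℂ) * cj)‖ := by
        rw [norm_pos_iff]
        exact hnoz cj (Metric.mem_closedBall_self hrpos.le)
      have h2 : 3 / m ≤ ‖Φ cj‖ := by
        rw [hΦ]
        dsimp only
        rw [norm_div, norm_pow]
        rw [le_div_iff₀ hqcj]
        have hm3 : (0:ℝ) < m / 3 := by positivity
        calc 3 / m * ‖q cj * Complex.exp ((h 0 : ℂ) * cj)‖
            ≤ 3 / m * ((m / 3) * ‖cj‖ ^ d) := by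
              apply mul_le_mul_of_nonneg_left h1 (by positivity)
          _ = ‖cj‖ ^ d := by field_simp
      have h3 : 3 / (2 * m) < 3 / m := by
        apply div_lt_div_of_pos_left (by norm_num) hm
        linarith
      linarith
    choose σfun hσmem hσzero using hzero
    -- injectivity
    have hTdiff : ∀ a b : ℕ, a < b → T b - T a = 2 * Real.pi * N * ((b : ℝ) - a) := by
      intro a b _
      rw [hT]; dsimp only; ring
    have himbound : ∀ j : ℕ, |(σfun j).im - (s0.im + T j)| ≤ r := by
      intro j
      have h1 := hσmem j
      rw [dist_eq_norm] at h1
      have h2 : |(σfun j - (s0 + ((T j : ℝ) : ℂ) * Complex.I)).im|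
          ≤ ‖σfun j - (s0 + ((T j : ℝ) : ℂ) * Complex.I)‖ := by
        exact Complex.abs_im_le_norm _
      have h3 : (σfun j - (s0 + ((T j : ℝ) : ℂ) * Complex.I)).im
          = (σfun j).im - (s0.im + T j) := by simp
      rw [h3] at h2
      linarith
    have hrebound : ∀ j : ℕ, |(σfun j).re - s0.re| ≤ r := by
      intro j
      have h1 := hσmem j
      rw [dist_eq_norm] at h1
      have h2 : |(σfun j - (s0 + ((T j : ℝ) : ℂ) * Complex.I)).re|
          ≤ ‖σfun j - (s0 + ((T j : ℝ) : ℂ) * Complex.I)‖ := by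
        exact Complex.abs_re_le_norm _
      have h3 : (σfun j - (s0 + ((T j : ℝ) : ℂ) * Complex.I)).re
          = (σfun j).re - s0.re := by simp
      rw [h3] at h2
      linarith
    have hinj : Function.Injective (fun j : ℕ => -σfun j) := by
      intro a b hab
      simp only [neg_inj] at hab
      by_contra hne
      have hkeyab : ∀ a b : ℕ, a < b → σfun a = σfun b → False := by
        intro a b hlt heq
        have h1 := himbound a
        have h2 := himbound b
        have h3 : T b - T a = 2 * Real.pi * N * ((b : ℝ) - a) := hTdiff a b hlt
        have h4 : (1:ℝ) ≤ (b : ℝ) - a := by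
          have : (a:ℝ) + 1 ≤ b := by exact_mod_cast hlt
          linarith
        have h5 : 2 * Real.pi * N ≤ T b - T a := by
          rw [h3]
          nlinarith
        have h6 := abs_le.mp h1
        have h7 := abs_le.mp h2
        rw [heq] at h6
        have hπ := Real.pi_gt_three
        have hN1 : (1:ℝ) ≤ N := by exact_mod_cast hN
        nlinarith
      rcases lt_trichotomy a b with hlt | heq | hgt
      · exact hkeyab a b hlt hab
      · exact hne heq
      · exact hkeyab b a hgt hab.symm
    -- membership in a finite set
    have hmem : ∀ j : ℕ, -σfun j ∈ ({s : ℂ | 0 ≤ s.re ∧ qbar s = 0}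
        ∪ {s : ℂ | |s.re| < εa ∧ qbar s = 0}) := by
      intro j
      have hqb : qbar (-σfun j) = 0 := by
        rw [hqbar0, neg_neg]
        exact hσzero j
      have hre := abs_le.mp (hrebound j)
      by_cases hs0neg : s0.re < 0
      · left
        refine ⟨?_, hqb⟩
        have hρval : ρ = -s0.re := by rw [hρ, if_pos hs0neg]
        rw [Complex.neg_re]
        have : (σfun j).re ≤ s0.re + r := by linarith
        have : (σfun j).re ≤ 0 := by
          have := hrρ
          rw [hρval] at this
          linarith
        linarith
      · right
        have hs00 : s0.re = 0 := le_antisymm hs0re (not_lt.mp hs0neg)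
        refine ⟨?_, hqb⟩
        rw [Complex.neg_re, abs_neg, abs_lt]
        rw [hs00] at hre
        constructor <;> linarith
    have hinfinite := Set.infinite_of_injective_forall_mem hinj hmem
    exact hinfinite (hfin.union hstrip)
  exact ⟨MP, MPR⟩
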